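/- Let X_1 → X_2 be a morphism of locally compact objects of bSet. Then X_1 → X_2 is weakly surjective (i.e., for every set Y, the induced map Hom_{bSet}(X_2, Y) → Hom_{bSet}(X_1, Y) is injective) if and only if the corresponding continuous map X_1^top → X_2^top of locally compact totally disconnected Hausdorff spaces has dense image. -/
import Mathlib

/-!
STATEMENT 9: A morphism `φ : X₁ → X₂` of locally compact objects of `bSet` is weakly surjective
(precomposition with `φ` is injective on maps to arbitrary discrete sets, i.e. on locally
constant maps) if and only if the corresponding continuous map `X₁^top → X₂^top` of locally
compact totally disconnected Hausdorff spaces has dense image.  We work directly with the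
topological incarnation: locally compact objects of `bSet` are the same as Hausdorff locally
compact totally disconnected spaces, and `Hom_{bSet}(X, Y)` for a set `Y` is the set of locally
constant maps `X^top → Y`.
-/

universe u

theorem stmt_9 {X₁ X₂ : Type u} [TopologicalSpace X₁] [TopologicalSpace X₂]
    [LocallyCompactSpace X₁] [TotallyDisconnectedSpace X₁] [T2Space X₁]
    [LocallyCompactSpace X₂] [TotallyDisconnectedSpace X₂] [T2Space X₂]
    (φ : X₁ → X₂) (hφ : Continuous φ) :
    (∀ (Y : Type u) (f g : X₂ → Y), IsLocallyConstant f → IsLocallyConstant g →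
        f ∘ φ = g ∘ φ → f = g) ↔
      DenseRange φ := by
  classical
  constructor
  · intro h
    by_contra hd
    rw [DenseRange, dense_iff_closure_eq] at hd
    have : ∃ x : X₂, x ∉ closure (Set.range φ) := by
      by_contra hx
      push_neg at hx
      exact hd (Set.eq_univ_of_forall hx)
    obtain ⟨x, hx⟩ := this
    obtain ⟨U, hU, hxU, hUsub⟩ :=
      loc_compact_Haus_tot_disc_of_zero_dim.mem_nhds_iff.mp
        ((isClosed_closure (s := Set.range φ)).isOpen_compl.mem_nhds hx)
    set f : X₂ → ULift.{u} Bool := fun y => ULift.up (decide (y ∈ U)) with hfdef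
    have hflc : IsLocallyConstant f := by
      rw [IsLocallyConstant.iff_exists_open]
      intro y
      by_cases hy : y ∈ U
      · exact ⟨U, hU.2, hy, fun z hz => by simp [hfdef, hz, hy]⟩
      · exact ⟨Uᶜ, hU.1.isOpen_compl, hy, fun z hz => by
          simp [hfdef, (Set.mem_compl_iff _ _).mp hz, hy]⟩
    have hglc : IsLocallyConstant (fun _ : X₂ => ULift.up.{u} false) :=
      IsLocallyConstant.const _
    have heq : f = fun _ => ULift.up false := by
      apply h _ f _ hflc hglc
      funext z
      have : φ z ∉ U := fun hz => hUsub hz (subset_closure (Set.mem_range_self z))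
      simp [hfdef, this]
    have := congrFun heq x
    simp [hfdef, hxU] at this
  · intro hd Y f g hf hg hfg
    have hS : IsClopen {y : X₂ | f y = g y} := by
      constructor
      · rw [← isOpen_compl_iff]
        apply isOpen_iff_forall_mem_open.mpr
        intro y hy
        obtain ⟨U, hU, hyU, hUf⟩ := (IsLocallyConstant.iff_exists_open f).mp hf y
        obtain ⟨V, hV, hyV, hVg⟩ := (IsLocallyConstant.iff_exists_open g).mp hg y
        refine ⟨U ∩ V, fun z ⟨hzU, hzV⟩ hz => hy ?_, hU.inter hV, hyU, hyV⟩
        show f y = g y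
        rw [← hUf z hzU, ← hVg z hzV]; exact hz
      · apply isOpen_iff_forall_mem_open.mpr
        intro y hy
        obtain ⟨U, hU, hyU, hUf⟩ := (IsLocallyConstant.iff_exists_open f).mp hf y
        obtain ⟨V, hV, hyV, hVg⟩ := (IsLocallyConstant.iff_exists_open g).mp hg y
        refine ⟨U ∩ V, fun z ⟨hzU, hzV⟩ => ?_, hU.inter hV, hyU, hyV⟩
        show f z = g z
        rw [hUf z hzU, hVg z hzV]; exact hy
    have hrange : Set.range φ ⊆ {y : X₂ | f y = g y} := by
      rintro _ ⟨z, rfl⟩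
      exact congrFun hfg z
    have huniv : {y : X₂ | f y = g y} = Set.univ := by
      have hdense : Dense {y : X₂ | f y = g y} := hd.mono hrange
      rw [← hS.1.closure_eq]
      exact dense_iff_closure_eq.mp hdense
    funext y
    exact (huniv ▸ Set.mem_univ y : y ∈ {y | f y = g y})
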